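/- Let N ≥ 1, let n₁, n₀ ≥ 0 be reals with n₁ + n₀ ≤ N, let c ∈ (0,1), and let φ₁, …, φ_N ∈ (0,1). Define p*_i = (n₁ φ_i / c + n₀ (1 − φ_i)/(1 − c) + N − n₁ − n₀)^{-1} for i = 1, …, N, and assume Σ_{i=1}^N p*_i = 1 and Σ_{i=1}^N φ_i p*_i = c. Then for every p = (p₁, …, p_N) with p_i > 0, Σ_{i=1}^N p_i = 1 and Σ_{i=1}^N φ_i p_i = c, one has Σ_{i=1}^N log p_i ≤ Σ_{i=1}^N log p*_i, with equality if and only if p = p*. That is, p* is the unique maximizer of Σ log p_i over the convex constraint set. -/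

import Mathlib

/-- The fixed-point weights `p*ᵢ = (n₁ φᵢ/c + n₀ (1 − φᵢ)/(1 − c) + N − n₁ − n₀)⁻¹`, when they
satisfy the probability constraint `Σ p*ᵢ = 1` and the mixture constraint `Σ φᵢ p*ᵢ = c`, form
the unique maximizer of `Σ log pᵢ` over the convex constraint set
`{p : pᵢ > 0, Σ pᵢ = 1, Σ φᵢ pᵢ = c}`. -/
theorem pstar_unique_maximizer
    (N : ℕ) (hN : 1 ≤ N) (n₁ n₀ : ℝ) (hn₁ : 0 ≤ n₁) (hn₀ : 0 ≤ n₀)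
    (hsum : n₁ + n₀ ≤ (N : ℝ)) (c : ℝ) (hc : c ∈ Set.Ioo (0 : ℝ) 1)
    (φ : Fin N → ℝ) (hφ : ∀ i, φ i ∈ Set.Ioo (0 : ℝ) 1)
    (pstar : Fin N → ℝ)
    (hpstar : ∀ i, pstar i
      = (n₁ * φ i / c + n₀ * (1 - φ i) / (1 - c) + (N : ℝ) - n₁ - n₀)⁻¹)
    (hpstar1 : ∑ i, pstar i = 1) (hpstarc : ∑ i, φ i * pstar i = c) :
    ∀ p : Fin N → ℝ, (∀ i, 0 < p i) → (∑ i, p i = 1) → (∑ i, φ i * p i = c) →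
      (∑ i, Real.log (p i) ≤ ∑ i, Real.log (pstar i)) ∧
      ((∑ i, Real.log (p i) = ∑ i, Real.log (pstar i)) ↔ p = pstar) := by
  obtain ⟨hc0, hc1⟩ := hc
  have hc1' : (0:ℝ) < 1 - c := by linarith
  set D : Fin N → ℝ := fun i => n₁ * φ i / c + n₀ * (1 - φ i) / (1 - c) + (N : ℝ) - n₁ - n₀
    with hD
  have hDpos : ∀ i, 0 < D i := by
    intro i
    obtain ⟨hφ0, hφ1⟩ := hφ i
    have h1 : 0 ≤ n₁ * φ i / c := by positivity
    have h2 : 0 ≤ n₀ * (1 - φ i) / (1 - c) := by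
      apply div_nonneg _ (le_of_lt hc1')
      nlinarith
    rcases lt_or_eq_of_le hn₁ with h | h
    · have : 0 < n₁ * φ i / c := by positivity
      simp only [hD]; linarith
    · rcases lt_or_eq_of_le hn₀ with h' | h'
      · have : 0 < n₀ * (1 - φ i) / (1 - c) := by
          apply div_pos _ hc1'
          nlinarith
        simp only [hD]; linarith
      · have hN' : (1:ℝ) ≤ (N:ℝ) := by exact_mod_cast hN
        have e1 : n₁ * φ i / c = 0 := by rw [← h]; ring
        have e2 : n₀ * (1 - φ i) / (1 - c) = 0 := by rw [← h']; ring
        simp only [hD, e1, e2]; linarith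
  have hps : ∀ i, pstar i = (D i)⁻¹ := fun i => hpstar i
  have hpspos : ∀ i, 0 < pstar i := by
    intro i; rw [hps i]; exact inv_pos.mpr (hDpos i)
  intro p hp hp1 hpc
  -- key identity : ∑ p i * D i = N
  have hkey : ∑ i, p i * D i = (N : ℝ) := by
    have hterm : ∀ i ∈ Finset.univ, p i * D i
        = (n₁/c) * (φ i * p i) + (n₀/(1-c)) * (p i - φ i * p i)
          + ((N:ℝ) - n₁ - n₀) * p i := by
      intro i _
      simp only [hD]
      field_simp
      ring
    rw [Finset.sum_congr rfl hterm]
    rw [Finset.sum_add_distrib, Finset.sum_add_distrib, ← Finset.mul_sum, ← Finset.mul_sum,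
      ← Finset.mul_sum, Finset.sum_sub_distrib, hp1, hpc]
    field_simp
    ring
  -- pointwise log inequality
  have hlog : ∀ i, Real.log (p i) - Real.log (pstar i) ≤ p i * D i - 1 := by
    intro i
    have hx : 0 < p i / pstar i := div_pos (hp i) (hpspos i)
    have h := Real.log_le_sub_one_of_pos hx
    rw [Real.log_div (hp i).ne' (hpspos i).ne'] at h
    have : p i / pstar i = p i * D i := by
      rw [hps i, div_eq_mul_inv, inv_inv]
    linarith [this ▸ h]
  have hsum_le : ∑ i, Real.log (p i) ≤ ∑ i, Real.log (pstar i) := by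
    have h1 : ∑ i, (Real.log (p i) - Real.log (pstar i)) ≤ ∑ i, (p i * D i - 1) :=
      Finset.sum_le_sum fun i _ => hlog i
    rw [Finset.sum_sub_distrib, Finset.sum_sub_distrib, hkey] at h1
    simp only [Finset.sum_const, Finset.card_univ, Fintype.card_fin, nsmul_eq_mul,
      mul_one] at h1
    linarith
  refine ⟨hsum_le, ?_, ?_⟩
  · intro heq
    by_contra hne
    obtain ⟨j, hj⟩ := Function.ne_iff.mp hne
    have hjlt : Real.log (p j) - Real.log (pstar j) < p j * D j - 1 := by
      have hx : 0 < p j / pstar j := div_pos (hp j) (hpspos j)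
      have hx1 : p j / pstar j ≠ 1 := by
        intro h
        exact hj ((div_eq_one_iff_eq (hpspos j).ne').mp h)
      have h := Real.log_lt_sub_one_of_pos hx hx1
      rw [Real.log_div (hp j).ne' (hpspos j).ne'] at h
      have : p j / pstar j = p j * D j := by rw [hps j, div_eq_mul_inv, inv_inv]
      linarith [this ▸ h]
    have h1 : ∑ i, (Real.log (p i) - Real.log (pstar i)) < ∑ i, (p i * D i - 1) :=
      Finset.sum_lt_sum (fun i _ => hlog i) ⟨j, Finset.mem_univ j, hjlt⟩
    rw [Finset.sum_sub_distrib, Finset.sum_sub_distrib, hkey] at h1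
    simp only [Finset.sum_const, Finset.card_univ, Fintype.card_fin, nsmul_eq_mul,
      mul_one] at h1
    linarith
  · intro h; rw [h]
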